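/- Define H(α; n) = log[2·Γ(αn + n)/(Γ(n)·Γ(αn + 1))] + (n−1)·log θ₁ + (α−1)·n·log θ₀, for constants θ₀ ∈ (0,1), θ₁ ∈ (0,1]. Let A(α) = (α+1)log(α+1) − α·log α + (α−1)log θ₀ + log θ₁. Then for each α > 0, H(α; n)/n → A(α) as n → ∞; in particular, if A(α) < 0 then H(α; n) → −∞, and if A(α) > 0 then H(α; n) → +∞. -/

import Mathlib

open Filter Real Asymptotics

/-- `S x = x log x - x`, the leading Stirling term. -/
noncomputable def Svc (x : ℝ) : ℝ := x * Real.log x - x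

lemma Svc_diff_le {u v : ℝ} (hu : 1 ≤ u) (huv : u ≤ v) : Svc v - Svc u ≤ (v - u) * Real.log v := by
  have hu0 : 0 < u := lt_of_lt_of_le one_pos hu
  have hv0 : 0 < v := hu0.trans_le huv
  have h1 : Real.log (v / u) ≤ v / u - 1 := Real.log_le_sub_one_of_pos (by positivity)
  have h2 : Real.log (v / u) = Real.log v - Real.log u := Real.log_div hv0.ne' hu0.ne'
  have h3 : u * (Real.log v - Real.log u) ≤ v - u := by
    have := mul_le_mul_of_nonneg_left h1 hu0.le
    rw [h2] at this
    calc u * (Real.log v - Real.log u) ≤ u * (v / u - 1) := this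
      _ = v - u := by field_simp
  simp only [Svc]; nlinarith [h3]

lemma le_Svc_diff {u v : ℝ} (hu : 1 ≤ u) (huv : u ≤ v) : (v - u) * Real.log u ≤ Svc v - Svc u := by
  have hu0 : 0 < u := lt_of_lt_of_le one_pos hu
  have hv0 : 0 < v := hu0.trans_le huv
  have h1 : Real.log (u / v) ≤ u / v - 1 := Real.log_le_sub_one_of_pos (by positivity)
  have h2 : Real.log (u / v) = Real.log u - Real.log v := Real.log_div hu0.ne' hv0.ne'
  have h3 : v - u ≤ v * (Real.log v - Real.log u) := by
    have := mul_le_mul_of_nonneg_left h1 hv0.le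
    rw [h2] at this
    have : v * (Real.log u - Real.log v) ≤ v * (u / v - 1) := this
    have h4 : v * (u / v - 1) = u - v := by field_simp
    nlinarith
  simp only [Svc]; nlinarith [h3]

lemma Svc_nonneg_mono {u v : ℝ} (hu : 1 ≤ u) (huv : u ≤ v) : Svc u ≤ Svc v := by
  have := le_Svc_diff hu huv
  nlinarith [Real.log_nonneg hu, sub_nonneg.mpr huv]

lemma Svc_abs_diff {u v : ℝ} (hu : 1 ≤ u) (hv : 1 ≤ v) :
    |Svc v - Svc u| ≤ |v - u| * Real.log (u + v) := by
  have hlog : (0:ℝ) ≤ Real.log (u + v) := Real.log_nonneg (by linarith)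
  rcases le_total u v with h | h
  · rw [abs_of_nonneg (by linarith [Svc_nonneg_mono hu h]), abs_of_nonneg (by linarith)]
    calc Svc v - Svc u ≤ (v - u) * Real.log v := Svc_diff_le hu h
      _ ≤ (v - u) * Real.log (u + v) := by
          apply mul_le_mul_of_nonneg_left _ (by linarith)
          exact Real.log_le_log (by linarith) (by linarith)
  · rw [abs_of_nonpos (by linarith [Svc_nonneg_mono hv h]), abs_of_nonpos (by linarith)]
    have := Svc_diff_le hv h
    calc -(Svc v - Svc u) = Svc u - Svc v := by ring
      _ ≤ (u - v) * Real.log u := Svc_diff_le hv h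
      _ ≤ (u - v) * Real.log (u + v) := by
          apply mul_le_mul_of_nonneg_left _ (by linarith)
          exact Real.log_le_log (by linarith) (by linarith)
      _ = -(v - u) * Real.log (u + v) := by ring


noncomputable def epsf (k : ℕ) : ℝ :=
  Real.log (k.factorial) - Svc k - Real.log (Real.sqrt (2 * k * π))

/-- Stirling error: `log k! - S(k) - log √(2kπ) → 0`. -/
lemma stirling_eps : Tendsto epsf atTop (nhds 0) := by
  unfold epsf
  have hg : ∀ᶠ k : ℕ in atTop, (Real.sqrt (2 * k * π) * ((k : ℝ) / Real.exp 1) ^ k) ≠ 0 := by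
    filter_upwards [eventually_ge_atTop 1] with k hk
    have hk0 : (0:ℝ) < k := by exact_mod_cast hk
    positivity
  have h1 : Tendsto (fun k : ℕ => (k.factorial : ℝ) /
      (Real.sqrt (2 * k * π) * ((k : ℝ) / Real.exp 1) ^ k)) atTop (nhds 1) := by
    have := (Asymptotics.isEquivalent_iff_tendsto_one hg).mp Stirling.factorial_isEquivalent_stirling
    exact this
  have h2 : Tendsto (fun k : ℕ => Real.log ((k.factorial : ℝ) /
      (Real.sqrt (2 * k * π) * ((k : ℝ) / Real.exp 1) ^ k))) atTop (nhds 0) := by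
    have hc : ContinuousAt Real.log 1 := Real.continuousAt_log one_ne_zero
    simpa [Real.log_one, Function.comp_def] using hc.tendsto.comp h1
  apply h2.congr'
  filter_upwards [eventually_ge_atTop 1] with k hk
  have hk0 : (0:ℝ) < k := by exact_mod_cast hk
  have hs : (0:ℝ) < Real.sqrt (2 * k * π) := Real.sqrt_pos.mpr (by positivity)
  have hp : (0:ℝ) < ((k:ℝ) / Real.exp 1) ^ k := by positivity
  rw [Real.log_div (by positivity) (by positivity), Real.log_mul hs.ne' hp.ne',
    Real.log_pow, Real.log_div hk0.ne' (Real.exp_pos 1).ne', Real.log_exp]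
  simp only [Svc]; ring

/-- `log(an+b)/n → 0`. -/
lemma log_lin_div (a b : ℝ) (ha : 0 < a) (hb : 0 ≤ b) :
    Tendsto (fun n : ℕ => Real.log (a * n + b) / n) atTop (nhds 0) := by
  have hx : Tendsto (fun n : ℕ => a * (n:ℝ) + b) atTop atTop :=
    tendsto_atTop_add_const_right _ b ((tendsto_natCast_atTop_atTop).const_mul_atTop ha)
  have h1 : Tendsto (fun x : ℝ => Real.log x / x) atTop (nhds 0) :=
    Real.isLittleO_log_id_atTop.tendsto_div_nhds_zero
  have h2 : Tendsto (fun n : ℕ => Real.log (a * n + b) / (a * n + b)) atTop (nhds 0) :=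
    h1.comp hx
  have h3 : Tendsto (fun n : ℕ => (a * (n:ℝ) + b) / n) atTop (nhds a) := by
    have : Tendsto (fun n : ℕ => a + b / (n:ℝ)) atTop (nhds (a + 0)) :=
      tendsto_const_nhds.add (tendsto_const_div_atTop_nhds_zero_nat b)
    rw [add_zero] at this
    apply this.congr'
    filter_upwards [eventually_ge_atTop 1] with n hn
    have hn0 : (0:ℝ) < n := by exact_mod_cast hn
    field_simp
  have := h2.mul h3
  rw [zero_mul] at this
  apply this.congr'
  filter_upwards [hx.eventually_gt_atTop 0, eventually_ge_atTop 1] with n hxn hn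
  have hn0 : (0:ℝ) < n := by exact_mod_cast hn
  field_simp


/-- Lower estimate for `log Γ` at a point `x ≥ 3` with `|x - y| ≤ |d|`, `2 ≤ y`. -/
lemma gamma_sandwich (y x D : ℝ) (hy : 2 ≤ y) (hx3 : 3 ≤ x)
    (hD : 2 ≤ D) (hxy1 : x - y ≤ D - 2) (hxy2 : y - x ≤ D - 2) :
    epsf (⌊x⌋₊ - 1) - D * Real.log (2 * y + 2 * D) ≤ Real.log (Real.Gamma x) - Svc y ∧
    Real.log (Real.Gamma x) - Svc y ≤
      epsf ⌊x⌋₊ + (1/2) * Real.log (2 * π * (y + D)) + D * Real.log (2 * y + 2 * D) := by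
  set m : ℕ := ⌊x⌋₊ with hmdef
  have hm3 : 3 ≤ m := Nat.le_floor (by exact_mod_cast hx3)
  have hm3' : (3:ℝ) ≤ m := by exact_mod_cast hm3
  have hmle : (m:ℝ) ≤ x := Nat.floor_le (by linarith)
  have hxlt : x < (m:ℝ) + 1 := Nat.lt_floor_add_one x
  have hcast : ((m - 1 : ℕ) : ℝ) = (m:ℝ) - 1 := by
    have h1m : 1 ≤ m := by omega
    push_cast [h1m]; ring
  have hmono := Real.Gamma_strictMonoOn_Ici.monotoneOn
  have hGm : Real.Gamma (m:ℝ) = ((m-1).factorial : ℝ) := by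
    have := Real.Gamma_nat_eq_factorial (m - 1)
    rw [hcast] at this
    simpa using this
  have hGm1 : Real.Gamma ((m:ℝ) + 1) = (m.factorial : ℝ) := by
    exact_mod_cast Real.Gamma_nat_eq_factorial m
  have hg1 : Real.Gamma (m:ℝ) ≤ Real.Gamma x :=
    hmono (by simp only [Set.mem_Ici]; linarith) (by simp only [Set.mem_Ici]; linarith) hmle
  have hg2 : Real.Gamma x ≤ Real.Gamma ((m:ℝ) + 1) :=
    hmono (by simp only [Set.mem_Ici]; linarith) (by simp only [Set.mem_Ici]; linarith) hxlt.le
  have hlog1 : Real.log ((m-1).factorial : ℝ) ≤ Real.log (Real.Gamma x) := by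
    rw [← hGm]
    exact Real.log_le_log (Real.Gamma_pos_of_pos (by linarith)) hg1
  have hlog2 : Real.log (Real.Gamma x) ≤ Real.log (m.factorial : ℝ) := by
    rw [← hGm1]
    exact Real.log_le_log (Real.Gamma_pos_of_pos (by linarith)) hg2
  have hy1 : (1:ℝ) ≤ y := by linarith
  have hm1' : (1:ℝ) ≤ ((m-1:ℕ):ℝ) := by rw [hcast]; linarith
  have hmR1 : (1:ℝ) ≤ (m:ℝ) := by linarith
  -- |m - y| ≤ D and |(m-1) - y| ≤ D
  have hdist1 : |(m:ℝ) - y| ≤ D := by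
    rw [abs_le]; constructor <;> linarith
  have hdist2 : |((m-1:ℕ):ℝ) - y| ≤ D := by
    rw [hcast, abs_le]; constructor <;> linarith
  have hlogle1 : Real.log (y + (m:ℝ)) ≤ Real.log (2 * y + 2 * D) := by
    apply Real.log_le_log (by linarith); linarith
  have hlogle2 : Real.log (y + ((m-1:ℕ):ℝ)) ≤ Real.log (2 * y + 2 * D) := by
    apply Real.log_le_log (by linarith)
    rw [hcast]; linarith
  have hD0 : (0:ℝ) ≤ D := by linarith
  have hb1 : Svc (m:ℝ) - Svc y ≤ D * Real.log (2 * y + 2 * D) :=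
    calc Svc (m:ℝ) - Svc y ≤ |Svc (m:ℝ) - Svc y| := le_abs_self _
      _ ≤ |(m:ℝ) - y| * Real.log (y + (m:ℝ)) := Svc_abs_diff hy1 hmR1
      _ ≤ D * Real.log (2 * y + 2 * D) :=
          mul_le_mul hdist1 hlogle1 (Real.log_nonneg (by linarith)) hD0
  have hb2 : Svc y - Svc ((m-1:ℕ):ℝ) ≤ D * Real.log (2 * y + 2 * D) :=
    calc Svc y - Svc ((m-1:ℕ):ℝ) ≤ |Svc ((m-1:ℕ):ℝ) - Svc y| := by
          rw [abs_sub_comm]; exact le_abs_self _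
      _ ≤ |((m-1:ℕ):ℝ) - y| * Real.log (y + ((m-1:ℕ):ℝ)) := Svc_abs_diff hy1 hm1'
      _ ≤ D * Real.log (2 * y + 2 * D) :=
          mul_le_mul hdist2 hlogle2 (Real.log_nonneg (by linarith)) hD0
  have hfact1 : Real.log ((m-1).factorial : ℝ) =
      epsf (m-1) + Svc ((m-1:ℕ):ℝ) + Real.log (Real.sqrt (2 * ((m-1:ℕ):ℝ) * π)) := by
    simp only [epsf]; ring
  have hfact2 : Real.log (m.factorial : ℝ) =
      epsf m + Svc (m:ℝ) + Real.log (Real.sqrt (2 * (m:ℝ) * π)) := by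
    simp only [epsf]; ring
  have hpi := Real.pi_gt_three
  have hsq1 : (0:ℝ) ≤ Real.log (Real.sqrt (2 * ((m-1:ℕ):ℝ) * π)) := by
    apply Real.log_nonneg
    rw [Real.one_le_sqrt]
    nlinarith
  have hsq2 : Real.log (Real.sqrt (2 * (m:ℝ) * π)) ≤ (1/2) * Real.log (2 * π * (y + D)) := by
    rw [Real.log_sqrt (by positivity)]
    have h := Real.log_le_log (show (0:ℝ) < 2*(m:ℝ)*π by positivity)
      (show 2*(m:ℝ)*π ≤ 2*π*(y+D) by nlinarith)
    linarith
  constructor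
  · have := hlog1
    rw [hfact1] at this
    linarith
  · have := hlog2
    rw [hfact2] at this
    linarith

lemma key_gamma (c d : ℝ) (hc : 0 < c) :
    Tendsto (fun n : ℕ => (Real.log (Real.Gamma (c * n + d)) - Svc (c * n)) / n)
      atTop (nhds 0) := by
  set D : ℝ := |d| + 2 with hD
  have hD0 : (0:ℝ) < D := by positivity
  have hD2 : (2:ℝ) ≤ D := by rw [hD]; linarith [abs_nonneg d]
  have hx : Tendsto (fun n : ℕ => c * (n:ℝ) + d) atTop atTop :=
    tendsto_atTop_add_const_right _ d ((tendsto_natCast_atTop_atTop).const_mul_atTop hc)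
  have hcn : Tendsto (fun n : ℕ => c * (n:ℝ)) atTop atTop :=
    (tendsto_natCast_atTop_atTop).const_mul_atTop hc
  have hm : Tendsto (fun n : ℕ => ⌊c * (n:ℝ) + d⌋₊) atTop atTop :=
    tendsto_nat_floor_atTop.comp hx
  have hm1 : Tendsto (fun n : ℕ => ⌊c * (n:ℝ) + d⌋₊ - 1) atTop atTop :=
    (tendsto_sub_atTop_nat 1).comp hm
  have hUlim : Tendsto (fun n : ℕ =>
      (epsf ⌊c * (n:ℝ) + d⌋₊ + (1/2) * Real.log (2 * π * (c * n + D))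
        + D * Real.log (2 * (c * n) + 2 * D)) / n) atTop (nhds 0) := by
    have h1 : Tendsto (fun n : ℕ => epsf ⌊c * (n:ℝ) + d⌋₊ * (n:ℝ)⁻¹) atTop (nhds 0) := by
      simpa using (stirling_eps.comp hm).mul tendsto_inv_atTop_nhds_zero_nat
    have h2 := (log_lin_div (2*π*c) (2*π*D) (by positivity) (by positivity)).const_mul (1/2 : ℝ)
    have h3 := (log_lin_div (2*c) (2*D) (by positivity) (by positivity)).const_mul D
    have h4 := (h1.add h2).add h3
    simp only [mul_zero, add_zero] at h4
    apply h4.congr'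
    filter_upwards [eventually_ge_atTop 1] with n hn
    have hn0 : (0:ℝ) < n := by exact_mod_cast hn
    have e1 : 2 * π * (c * (n:ℝ) + D) = 2*π*c * n + 2*π*D := by ring
    have e2 : 2 * (c * (n:ℝ)) + 2 * D = 2*c * n + 2*D := by ring
    rw [e1, e2]
    field_simp
  have hLlim : Tendsto (fun n : ℕ =>
      (epsf (⌊c * (n:ℝ) + d⌋₊ - 1) - D * Real.log (2 * (c * n) + 2 * D)) / n)
      atTop (nhds 0) := by
    have h1 : Tendsto (fun n : ℕ => epsf (⌊c * (n:ℝ) + d⌋₊ - 1) * (n:ℝ)⁻¹) atTop (nhds 0) := by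
      simpa using (stirling_eps.comp hm1).mul tendsto_inv_atTop_nhds_zero_nat
    have h3 := (log_lin_div (2*c) (2*D) (by positivity) (by positivity)).const_mul D
    have h4 := h1.sub h3
    simp only [mul_zero, sub_zero] at h4
    apply h4.congr'
    filter_upwards [eventually_ge_atTop 1] with n hn
    have hn0 : (0:ℝ) < n := by exact_mod_cast hn
    have e2 : 2 * (c * (n:ℝ)) + 2 * D = 2*c * n + 2*D := by ring
    rw [e2]
    field_simp
  refine tendsto_of_tendsto_of_tendsto_of_le_of_le' hLlim hUlim ?_ ?_
  · filter_upwards [eventually_ge_atTop 1, hcn.eventually_ge_atTop 2, hx.eventually_ge_atTop 3]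
      with n hn hcn2 hx3
    have hn0 : (0:ℝ) < n := by exact_mod_cast hn
    have hd1 : -|d| ≤ d := neg_abs_le d
    have hd2 : d ≤ |d| := le_abs_self d
    have := (gamma_sandwich (c*n) (c*n+d) D hcn2 hx3 hD2 (by rw [hD]; linarith)
      (by rw [hD]; linarith)).1
    exact div_le_div_of_nonneg_right this hn0.le
  · filter_upwards [eventually_ge_atTop 1, hcn.eventually_ge_atTop 2, hx.eventually_ge_atTop 3]
      with n hn hcn2 hx3
    have hn0 : (0:ℝ) < n := by exact_mod_cast hn
    have hd1 : -|d| ≤ d := neg_abs_le d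
    have hd2 : d ≤ |d| := le_abs_self d
    have := (gamma_sandwich (c*n) (c*n+d) D hcn2 hx3 hD2 (by rw [hD]; linarith)
      (by rw [hD]; linarith)).2
    exact div_le_div_of_nonneg_right this hn0.le


/-- The asymptotic VC entropy of `k`-point simplex learning,
`H(α;n) = log[2·Γ(αn+n)/(Γ(n)·Γ(αn+1))] + (n−1)·log θ₁ + (α−1)·n·log θ₀`,
satisfies `H(α;n)/n → A(α)` as `n → ∞`, where
`A(α) = (α+1)log(α+1) − α·log α + (α−1)log θ₀ + log θ₁`; in particular
`H(α;n) → −∞` if `A(α) < 0` and `H(α;n) → +∞` if `A(α) > 0`. -/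
theorem vc_entropy_asymptotics
    (θ₀ θ₁ : ℝ) (hθ₀ : θ₀ ∈ Set.Ioo (0 : ℝ) 1) (hθ₁ : θ₁ ∈ Set.Ioc (0 : ℝ) 1)
    (α : ℝ) (hα : 0 < α) :
    let H : ℕ → ℝ := fun n =>
      Real.log (2 * Real.Gamma (α * n + n) / (Real.Gamma n * Real.Gamma (α * n + 1)))
        + ((n : ℝ) - 1) * Real.log θ₁ + (α - 1) * n * Real.log θ₀
    let A : ℝ := (α + 1) * Real.log (α + 1) - α * Real.log α
        + (α - 1) * Real.log θ₀ + Real.log θ₁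
    Tendsto (fun n : ℕ => H n / n) atTop (nhds A) ∧
    (A < 0 → Tendsto H atTop atBot) ∧
    (0 < A → Tendsto H atTop atTop) := by
  intro H A
  have hα1 : (0:ℝ) < α + 1 := by linarith
  have hmain : Tendsto (fun n : ℕ => H n / n) atTop (nhds A) := by
    have f1 := key_gamma (α + 1) 0 hα1
    have f2 := key_gamma 1 0 one_pos
    have f3 := key_gamma α 1 hα
    have t0 := tendsto_const_div_atTop_nhds_zero_nat (Real.log 2)
    have t4 : Tendsto (fun n : ℕ => (1 - 1/(n:ℝ)) * Real.log θ₁) atTop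
        (nhds ((1 - 0) * Real.log θ₁)) :=
      (tendsto_const_nhds.sub (tendsto_const_div_atTop_nhds_zero_nat 1)).mul_const _
    have hG := ((((t0.add f1).sub f2).sub f3).add
      (tendsto_const_nhds : Tendsto (fun _ : ℕ => (α+1) * Real.log (α+1) - α * Real.log α
        + (α - 1) * Real.log θ₀) atTop _)).add t4
    have hlim : (((((0:ℝ) + 0) - 0) - 0) + ((α+1) * Real.log (α+1) - α * Real.log α
        + (α - 1) * Real.log θ₀)) + (1 - 0) * Real.log θ₁ = A := by
      show _ = (α + 1) * Real.log (α + 1) - α * Real.log α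
        + (α - 1) * Real.log θ₀ + Real.log θ₁
      ring
    rw [hlim] at hG
    apply hG.congr'
    filter_upwards [eventually_ge_atTop 1] with n hn
    have hn0 : (0:ℝ) < n := by exact_mod_cast hn
    have ha : (0:ℝ) < α * n + n := by nlinarith
    have hb : (0:ℝ) < α * n + 1 := by nlinarith
    have hΓa := Real.Gamma_pos_of_pos ha
    have hΓn := Real.Gamma_pos_of_pos hn0
    have hΓb := Real.Gamma_pos_of_pos hb
    have hsplit : Real.log (2 * Real.Gamma (α * n + n) / (Real.Gamma n * Real.Gamma (α * n + 1)))
        = Real.log 2 + Real.log (Real.Gamma (α * n + n)) - Real.log (Real.Gamma n)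
          - Real.log (Real.Gamma (α * n + 1)) := by
      rw [Real.log_div (by positivity) (by positivity), Real.log_mul (by norm_num) hΓa.ne',
        Real.log_mul hΓn.ne' hΓb.ne']
      ring
    have hS : Svc ((α+1) * n) = Svc (1 * n) + Svc (α * n)
        + n * ((α+1) * Real.log (α+1) - α * Real.log α) := by
      simp only [Svc, one_mul]
      rw [Real.log_mul hα1.ne' hn0.ne', Real.log_mul hα.ne' hn0.ne']
      ring
    have e1 : (α + 1) * (n:ℝ) + 0 = α * n + n := by ring
    have e2 : (1:ℝ) * (n:ℝ) + 0 = (n:ℝ) := by ring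
    simp only [H, e1, e2, hsplit, hS]
    field_simp
    ring
  refine ⟨hmain, ?_, ?_⟩
  · intro hA
    have h := Tendsto.neg_mul_atTop hA hmain tendsto_natCast_atTop_atTop
    apply h.congr'
    filter_upwards [eventually_ge_atTop 1] with n hn
    have hn0 : (0:ℝ) < n := by exact_mod_cast hn
    exact div_mul_cancel₀ _ hn0.ne'
  · intro hA
    have h := Filter.Tendsto.pos_mul_atTop hA hmain tendsto_natCast_atTop_atTop
    apply h.congr'
    filter_upwards [eventually_ge_atTop 1] with n hn
    have hn0 : (0:ℝ) < n := by exact_mod_cast hn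
    exact div_mul_cancel₀ _ hn0.ne'
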